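/- Let ℓ and L be natural numbers with 0 < ℓ < L, and let w ∈ ℓ²(ℕ) be a unit vector. Then there exist a unit vector w̃ ∈ ℓ²(ℕ) and a function k : ℕ → ℕ such that for every j ∈ ℕ one has j·L ≤ k(j) and k(j) + ℓ ≤ (j+1)·L; w̃_d = 0 whenever k(j) ≤ d < k(j) + ℓ for some j ∈ ℕ; and √(1 − |⟨w̃, w⟩|²) ≤ √(ℓ/(L−ℓ)). -/

import Mathlib

open scoped InnerProductSpace
open Finset

private lemma sum_blocks' (g : ℕ → ℝ) (ℓ : ℕ) (m : ℕ) :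
    ∑ i ∈ range m, ∑ t ∈ range ℓ, g (i * ℓ + t) = ∑ s ∈ range (m * ℓ), g s := by
  induction m with
  | zero => simp
  | succ m ih => rw [Finset.sum_range_succ, ih, Nat.succ_mul, Finset.sum_range_add]

private lemma tsum_block (f : ℕ → ℝ) (L : ℕ) (hL : 0 < L) (hfsum : Summable f) :
    (∑' d, f d = ∑' j, ∑ t ∈ range L, f (j * L + t)) ∧
      Summable (fun j => ∑ t ∈ range L, f (j * L + t)) := by
  haveI : NeZero L := ⟨hL.ne'⟩
  set F : ℕ × Fin L → ℝ := fun p => f (p.1 * L + ↑p.2) with hF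
  have hcomp : ∀ d : ℕ, F (Nat.divModEquiv L d) = f d := by
    intro d
    show f (d / L * L + d % L) = f d
    rw [Nat.div_add_mod']
  have hFs : Summable F := by
    rw [← Equiv.summable_iff (Nat.divModEquiv L)]
    exact hfsum.congr fun d => (hcomp d).symm
  have hinner : ∀ j : ℕ, ∑' c : Fin L, F (j, c) = ∑ t ∈ range L, f (j * L + t) := by
    intro j
    rw [tsum_fintype]
    exact Fin.sum_univ_eq_sum_range (fun t => f (j * L + t)) L
  constructor
  · have he : ∑' d, f d = ∑' p, F p := by
      rw [← Equiv.tsum_eq (Nat.divModEquiv L) F]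
      exact tsum_congr fun d => (hcomp d).symm
    rw [he, Summable.tsum_prod hFs]
    exact tsum_congr hinner
  · have := hFs.prod
    simpa only [hinner] using this

theorem stmt_9 (ℓ L : ℕ) (hℓ : 0 < ℓ) (hL : ℓ < L)
    (w : lp (fun _ : ℕ => ℂ) 2) (hw : ‖w‖ = 1) :
    ∃ wt : lp (fun _ : ℕ => ℂ) 2, ∃ k : ℕ → ℕ, ‖wt‖ = 1 ∧
      (∀ j : ℕ, j * L ≤ k j ∧ k j + ℓ ≤ (j + 1) * L) ∧
      (∀ (j d : ℕ), k j ≤ d → d < k j + ℓ → wt d = 0) ∧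
      Real.sqrt (1 - ‖⟪wt, w⟫_ℂ‖ ^ 2) ≤
        Real.sqrt ((ℓ : ℝ) / ((L : ℝ) - (ℓ : ℝ))) := by
  classical
  have hL0 : 0 < L := hℓ.trans hL
  have hLcast : (ℓ:ℝ) < L := by exact_mod_cast hL
  have hLR : (0:ℝ) < (L:ℝ) - ℓ := by linarith
  by_cases hcase : (L:ℝ) - ℓ ≤ ℓ
  · -- trivial case: RHS ≥ 1
    refine ⟨lp.single 2 ℓ 1, fun j => j * L, ?_, ?_, ?_, ?_⟩
    · have := lp.norm_single (p := 2) (E := fun _ : ℕ => ℂ) (by norm_num) ℓ (1:ℂ)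
      simpa using this
    · intro j
      refine ⟨le_refl _, ?_⟩
      show j * L + ℓ ≤ (j + 1) * L
      have h2 : (j + 1) * L = j * L + L := by ring
      rw [h2]
      exact Nat.add_le_add_left hL.le _
    · intro j d hd1 hd2
      simp only at hd1 hd2
      have hdne : d ≠ ℓ := by
        rcases Nat.eq_zero_or_pos j with rfl | hj
        · simp only [Nat.zero_mul, Nat.zero_add] at hd1 hd2
          omega
        · have hjL : L ≤ j * L := Nat.le_mul_of_pos_left L hj
          have h1 : L ≤ d := le_trans hjL hd1
          omega
      rw [lp.single_apply]
      simp [hdne]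
    · have h1 : Real.sqrt (1 - ‖⟪(lp.single 2 ℓ 1 : lp (fun _ : ℕ => ℂ) 2), w⟫_ℂ‖ ^ 2) ≤ 1 := by
        rw [show (1:ℝ) = Real.sqrt 1 by rw [Real.sqrt_one]]
        apply Real.sqrt_le_sqrt
        have : (0:ℝ) ≤ ‖⟪(lp.single 2 ℓ 1 : lp (fun _ : ℕ => ℂ) 2), w⟫_ℂ‖ ^ 2 := sq_nonneg _
        rw [Real.sqrt_one]
        linarith
      have h2 : (1:ℝ) ≤ Real.sqrt ((ℓ:ℝ) / ((L:ℝ) - ℓ)) := by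
        apply Real.one_le_sqrt.mpr
        rw [le_div_iff₀ hLR]
        linarith
      linarith
  · -- main case : L > 2ℓ
    push_neg at hcase
    set m : ℕ := L / ℓ with hm
    have hm0 : 0 < m := Nat.div_pos hL.le hℓ
    have hm2 : 2 ≤ m := by
      apply (Nat.le_div_iff_mul_le hℓ).mpr
      have : (2:ℝ) * ℓ < L := by linarith
      exact_mod_cast this.le
    have hmlL : m * ℓ ≤ L := Nat.div_mul_le_self L ℓ
    have hmlLR : (L:ℝ) - ℓ < (m:ℝ) * ℓ := by
      have heq : m * ℓ + L % ℓ = L := Nat.div_add_mod' L ℓ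
      have heqR : (m:ℝ) * ℓ + (L % ℓ : ℕ) = L := by exact_mod_cast heq
      have hmod : ((L % ℓ : ℕ) : ℝ) < ℓ := by exact_mod_cast Nat.mod_lt L hℓ
      linarith
    have hm0R : (0:ℝ) < m := by exact_mod_cast hm0
    -- mass function
    set f : ℕ → ℝ := fun d => ‖w d‖ ^ 2 with hf
    have hf0 : ∀ d, 0 ≤ f d := fun d => sq_nonneg _
    have hfsum : Summable f := by
      have := (lp.memℓp w).summable (p := 2) (by norm_num)
      simpa [f, Real.rpow_two] using this
    have hsum1 : ∑' d, f d = 1 := by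
      have key := lp.norm_rpow_eq_tsum (p := 2) (by norm_num) w
      rw [hw] at key
      simp only [ENNReal.toReal_ofNat, Real.rpow_two, one_pow] at key
      exact key.symm
    -- windows
    set W : ℕ → ℕ → ℝ := fun j i => ∑ t ∈ range ℓ, f (j * L + (i * ℓ + t)) with hW
    choose I hImem hImin using fun j =>
      (range m).exists_min_image (W j) ⟨0, mem_range.mpr hm0⟩
    have hIlt : ∀ j, I j < m := fun j => mem_range.mp (hImem j)
    have hIL : ∀ j, I j * ℓ + ℓ ≤ L := by
      intro j
      calc I j * ℓ + ℓ = (I j + 1) * ℓ := by ring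
        _ ≤ m * ℓ := Nat.mul_le_mul_right ℓ (hIlt j)
        _ ≤ L := hmlL
    set k : ℕ → ℕ := fun j => j * L + I j * ℓ with hk
    have hkbound : ∀ j : ℕ, j * L ≤ k j ∧ k j + ℓ ≤ (j + 1) * L := by
      intro j
      refine ⟨Nat.le_add_right _ _, ?_⟩
      have h1 : k j + ℓ = j * L + (I j * ℓ + ℓ) := by rw [hk]; ring
      have h2 : (j + 1) * L = j * L + L := by ring
      rw [h1, h2]
      exact Nat.add_le_add_left (hIL j) _
    -- removed predicate
    set P : ℕ → Prop := fun d => ∃ j, k j ≤ d ∧ d < k j + ℓ with hP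
    set r : ℕ → ℝ := fun d => if P d then f d else 0 with hr
    set g0 : ℕ → ℝ := fun d => if P d then 0 else f d with hg0
    have hfgr : ∀ d, f d = g0 d + r d := by
      intro d
      by_cases h : P d <;> simp [hg0, hr, h]
    have hr0 : ∀ d, 0 ≤ r d := by
      intro d; rw [hr]; dsimp only; split <;> [exact hf0 d; exact le_refl 0]
    have hrle : ∀ d, r d ≤ f d := by
      intro d; rw [hr]; dsimp only; split <;> [exact le_refl _; exact hf0 d]
    have hg00 : ∀ d, 0 ≤ g0 d := by
      intro d; rw [hg0]; dsimp only; split <;> [exact le_refl 0; exact hf0 d]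
    have hg0le : ∀ d, g0 d ≤ f d := by
      intro d; rw [hg0]; dsimp only; split <;> [exact hf0 d; exact le_refl _]
    have hrsum : Summable r := Summable.of_nonneg_of_le hr0 hrle hfsum
    have hg0sum : Summable g0 := Summable.of_nonneg_of_le hg00 hg0le hfsum
    -- window membership iff, within a block
    have hblock_eq : ∀ j j' t : ℕ, t < L → j' * L ≤ j * L + t → j * L + t < (j' + 1) * L →
        j' = j := by
      intro j j' t ht h1 h2
      have h3 : j' * L < (j + 1) * L := by
        apply lt_of_le_of_lt h1
        have : (j + 1) * L = j * L + L := by ring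
        omega
      have h4 : j * L < (j' + 1) * L := lt_of_le_of_lt (Nat.le_add_right _ t) h2
      have h5 : j' < j + 1 := lt_of_mul_lt_mul_right h3 (Nat.zero_le L)
      have h6 : j < j' + 1 := lt_of_mul_lt_mul_right h4 (Nat.zero_le L)
      omega
    have hwin : ∀ j t : ℕ, t < L →
        (P (j * L + t) ↔ (I j * ℓ ≤ t ∧ t < I j * ℓ + ℓ)) := by
      intro j t ht
      constructor
      · rintro ⟨j', h1, h2⟩
        have hj'1 : j' * L ≤ j * L + t := le_trans (hkbound j').1 h1
        have hj'2 : j * L + t < (j' + 1) * L := lt_of_lt_of_le h2 (hkbound j').2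
        have hjj : j' = j := hblock_eq j j' t ht hj'1 hj'2
        subst hjj
        rw [hk] at h1 h2
        constructor
        · exact le_of_add_le_add_left h1
        · have : j' * L + t < j' * L + (I j' * ℓ + ℓ) := by
            rw [← add_assoc]; exact h2
          exact lt_of_add_lt_add_left this
      · rintro ⟨h1, h2⟩
        refine ⟨j, ?_, ?_⟩
        · rw [hk]; exact Nat.add_le_add_left h1 _
        · rw [hk, add_assoc]; exact Nat.add_lt_add_left h2 _
    -- block sums of r equal chosen window masses
    have hrblock : ∀ j, ∑ t ∈ range L, r (j * L + t) = W j (I j) := by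
      intro j
      have h1 : ∀ t ∈ range L, r (j * L + t) =
          if t ∈ Finset.Ico (I j * ℓ) (I j * ℓ + ℓ) then f (j * L + t) else 0 := by
        intro t ht
        rw [mem_range] at ht
        simp only [hr, Finset.mem_Ico]
        exact if_congr (hwin j t ht) rfl rfl
      rw [Finset.sum_congr rfl h1, Finset.sum_ite_mem]
      have hsub : Finset.range L ∩ Finset.Ico (I j * ℓ) (I j * ℓ + ℓ) =
          Finset.Ico (I j * ℓ) (I j * ℓ + ℓ) := by
        apply Finset.inter_eq_right.mpr
        intro x hx
        rw [Finset.mem_Ico] at hx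
        rw [Finset.mem_range]
        have := hIL j
        omega
      rw [hsub, Finset.sum_Ico_eq_sum_range]
      simp only [Nat.add_sub_cancel_left]
      rfl
    -- block mass
    set B : ℕ → ℝ := fun j => ∑ t ∈ range L, f (j * L + t) with hB
    obtain ⟨hBeq, hBsum⟩ := tsum_block f L hL0 hfsum
    have hBsum1 : ∑' j, B j = 1 := by rw [hB, ← hBeq, hsum1]
    -- per-block bound
    have hmW : ∀ j, (m:ℝ) * W j (I j) ≤ B j := by
      intro j
      have h1 : (m:ℝ) * W j (I j) = ∑ _i ∈ range m, W j (I j) := by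
        rw [Finset.sum_const, card_range, nsmul_eq_mul]
      have h2 : ∑ _i ∈ range m, W j (I j) ≤ ∑ i ∈ range m, W j i :=
        Finset.sum_le_sum (fun i hi => hImin j i hi)
      have h3 : ∑ i ∈ range m, W j i = ∑ s ∈ range (m * ℓ), f (j * L + s) :=
        sum_blocks' (fun s => f (j * L + s)) ℓ m
      have h4 : ∑ s ∈ range (m * ℓ), f (j * L + s) ≤ B j :=
        Finset.sum_le_sum_of_subset_of_nonneg (by
          apply Finset.range_subset_range.mpr hmlL) (fun i _ _ => hf0 _)
      linarith
    -- removed mass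
    obtain ⟨hreq, hrBsum⟩ := tsum_block r L hL0 hrsum
    have hWsum : Summable (fun j => W j (I j)) := hrBsum.congr hrblock
    have hRd : ∑' d, r d = ∑' j, W j (I j) := by
      rw [hreq]; exact tsum_congr hrblock
    set Rd : ℝ := ∑' d, r d with hRddef
    have hRdle : Rd ≤ 1 / m := by
      have h1 : Rd ≤ ∑' j, B j / m := by
        rw [hRd]
        apply Summable.tsum_le_tsum _ hWsum (hBsum.div_const m)
        intro j
        rw [le_div_iff₀ hm0R]
        have := hmW j
        linarith
      have h2 : ∑' j, B j / (m:ℝ) = 1 / m := by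
        rw [tsum_div_const, hBsum1]
      linarith
    -- the truncated vector
    set g0v : ℕ → ℂ := fun d => if P d then 0 else w d with hg0v
    have hg0vnorm : ∀ d, ‖g0v d‖ ^ 2 = g0 d := by
      intro d
      rw [hg0v, hg0]
      dsimp only
      split <;> simp [hf]
    have hmem : Memℓp g0v 2 := by
      apply memℓp_gen
      have : Summable (fun d => ‖g0v d‖ ^ 2) := hg0sum.congr fun d => (hg0vnorm d).symm
      simpa [Real.rpow_two] using this
    set v : lp (fun _ : ℕ => ℂ) 2 := ⟨g0v, hmem⟩ with hv
    have hvcoe : ∀ d, v d = g0v d := fun d => rfl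
    set N : ℝ := ∑' d, g0 d with hN
    have hNRd : N = 1 - Rd := by
      have h1 : ∑' d, (g0 d + r d) = N + Rd := Summable.tsum_add hg0sum hrsum
      have h2 : ∑' d, (g0 d + r d) = 1 := by
        rw [← hsum1]; exact tsum_congr fun d => (hfgr d).symm
      linarith
    have hmhalf : 1 / (m:ℝ) ≤ 1 / 2 := by
      apply one_div_le_one_div_of_le (by norm_num)
      exact_mod_cast hm2
    have hNpos : 0 < N := by rw [hNRd]; linarith
    have hN1 : N ≤ 1 := by
      rw [hNRd]
      have : 0 ≤ Rd := tsum_nonneg hr0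
      linarith
    have hnormv : ‖v‖ = Real.sqrt N := by
      rw [lp.norm_eq_tsum_rpow (by norm_num) v, Real.sqrt_eq_rpow]
      norm_num [Real.rpow_two]
      congr 1
      rw [hN]
      exact tsum_congr fun d => hg0vnorm d
    have hinner_v : ⟪v, w⟫_ℂ = (N : ℂ) := by
      rw [lp.inner_eq_tsum, hN, Complex.ofReal_tsum]
      apply tsum_congr
      intro d
      rw [RCLike.inner_apply']
      rw [hvcoe d, hg0v, hg0]
      dsimp only
      split
      · simp
      · rw [mul_comm, Complex.mul_conj']
        push_cast [hf]
        ring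
    set c : ℝ := (Real.sqrt N)⁻¹ with hc
    have hsqrtpos : 0 < Real.sqrt N := Real.sqrt_pos.mpr hNpos
    refine ⟨((c:ℂ) • v), k, ?_, hkbound, ?_, ?_⟩
    · rw [norm_smul, hnormv]
      simp only [Complex.norm_real, Real.norm_eq_abs, hc, abs_inv,
        abs_of_nonneg (Real.sqrt_nonneg N)]
      exact inv_mul_cancel₀ hsqrtpos.ne'
    · intro j d hd1 hd2
      have : ((c:ℂ) • v) d = (c:ℂ) * v d := by rw [lp.coeFn_smul]; rfl
      rw [this, hvcoe d, hg0v]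
      dsimp only
      rw [if_pos ⟨j, hd1, hd2⟩]
      ring
    · have habs : ‖⟪((c:ℂ) • v), w⟫_ℂ‖ = Real.sqrt N := by
        rw [inner_smul_left, hinner_v]
        rw [Complex.conj_ofReal, ← Complex.ofReal_mul, Complex.norm_real, Real.norm_eq_abs]
        rw [abs_of_nonneg (by positivity)]
        rw [hc]
        rw [show N = Real.sqrt N * Real.sqrt N from (Real.mul_self_sqrt hNpos.le).symm]
        field_simp
        rw [Real.sqrt_sq hsqrtpos.le]
      rw [habs, Real.sq_sqrt hNpos.le]
      apply Real.sqrt_le_sqrt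
      have h1m : 1 / (m:ℝ) ≤ (ℓ:ℝ) / ((L:ℝ) - ℓ) := by
        rw [div_le_div_iff₀ hm0R hLR]
        nlinarith [hmlLR]
      linarith [hNRd, hRdle]
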